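/- arXiv:1902.05432 — 2 statements merged into one kernel-verified Lean document; each statement's English description precedes it below -/
import Mathlib

section
/- For every rooted tree G and every expanding search σ of G, the expected payoff against the tree hiding strategy satisfies P(h_G, σ) ≤ V_G; that is, the tree hiding strategy h_G guarantees that the expected payoff of the game is at most V_G, and every depth-first expanding search is a best response to h_G. -/
/-- A rooted tree with vertex probabilities: a single vertex, a root with one branch,
or a root with two branches. -/
inductive RTree : Type
  | leaf (p : ℝ) : RTree
  | node1 (p : ℝ) (G' : RTree) : RTree
  | node2 (p : ℝ) (G₁ G₂ : RTree) : RTree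

namespace RTree

/-- Validity of the probabilities: every leaf has probability in `(0,1)`, and every
internal vertex (including the root) has probability in `(0,1]`. -/
def valid : RTree → Prop
  | leaf p => 0 < p ∧ p < 1
  | node1 p G' => (0 < p ∧ p ≤ 1) ∧ valid G'
  | node2 p G₁ G₂ => (0 < p ∧ p ≤ 1) ∧ valid G₁ ∧ valid G₂

/-- `π(G)`, the product of the probabilities of all vertices of `G`. -/
def piT : RTree → ℝ
  | leaf p => p
  | node1 p G' => p * piT G'
  | node2 p G₁ G₂ => p * (piT G₁ * piT G₂)

/-- The recursively defined value `V_G` of the game on `G`. -/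
noncomputable def valT : RTree → ℝ
  | leaf p => p
  | node1 p G' => p * valT G'
  | node2 p G₁ G₂ =>
      p * (((1 - piT G₁) / valT G₁ + (1 - piT G₂) / valT G₂)⁻¹) * (1 - piT G₁ * piT G₂)

/-- The normalizing factor `λ` for a branch vertex with branches `G₁` and `G₂`. -/
noncomputable def lamT (G₁ G₂ : RTree) : ℝ :=
  ((1 - piT G₁) / valT G₁ + (1 - piT G₂) / valT G₂)⁻¹


/-- Vertices of a rooted tree, as addresses: the root is `[]`, and the address of a
vertex in a branch is the branch direction (`false` for the first/unique branch,
`true` for the second) followed by its address within the branch. -/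
def verts : RTree → List (List Bool)
  | leaf _ => [[]]
  | node1 _ G' => [] :: (verts G').map (List.cons false)
  | node2 _ G₁ G₂ => [] :: ((verts G₁).map (List.cons false) ++ (verts G₂).map (List.cons true))

/-- The success probability of the vertex at a given address. -/
def pAt : RTree → List Bool → ℝ
  | leaf p, _ => p
  | node1 p _, [] => p
  | node1 _ G', _ :: l => pAt G' l
  | node2 p _ _, [] => p
  | node2 _ G₁ _, false :: l => pAt G₁ l
  | node2 _ _ G₂, true :: l => pAt G₂ l

/-- The subtree `G(v)` rooted at the vertex with address `v` (if it exists). -/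
def sub? : RTree → List Bool → Option RTree
  | t, [] => some t
  | leaf _, _ :: _ => none
  | node1 _ G', false :: l => sub? G' l
  | node1 _ _, true :: _ => none
  | node2 _ G₁ _, false :: l => sub? G₁ l
  | node2 _ _ G₂, true :: l => sub? G₂ l

/-- The tree hiding strategy `h_G`, as a function assigning probabilities to addresses. -/
noncomputable def hide : RTree → List Bool → ℝ
  | leaf _, [] => 1
  | leaf _, _ :: _ => 0
  | node1 _ _, [] => 0
  | node1 _ G', false :: l => hide G' l
  | node1 _ _, true :: _ => 0
  | node2 _ _ _, [] => 0
  | node2 _ G₁ G₂, false :: l => lamT G₁ G₂ * ((1 - piT G₁) / valT G₁) * hide G₁ l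
  | node2 _ G₁ G₂, true :: l => lamT G₁ G₂ * ((1 - piT G₂) / valT G₂) * hide G₂ l

/-- An expanding search of `G`: an ordering of all of the vertices of `G` in which every
vertex other than the root appears after its parent (hence the root `[]` comes first). -/
def IsSearch (G : RTree) (σ : List (List Bool)) : Prop :=
  σ.Perm (verts G) ∧ ∀ a ∈ σ, a ≠ [] → σ.idxOf a.dropLast < σ.idxOf a

/-- A depth-first expanding search: for every vertex `v`, the vertices of the subtree
`G(v)` occupy consecutive positions beginning with `v`;  equivalently, any vertex `w`
appearing between `v` and a descendant of `v` is itself a descendant of `v`. -/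
def IsDFS (G : RTree) (σ : List (List Bool)) : Prop :=
  IsSearch G σ ∧ ∀ v a w, v ∈ σ → a ∈ σ → w ∈ σ → v <+: a →
    σ.idxOf v ≤ σ.idxOf w → σ.idxOf w ≤ σ.idxOf a → v <+: w

/-- `P(v,σ)`: the probability of reaching and successfully searching vertex `v`,
i.e. the product of `p` over the locations searched up to and including `v`. -/
def capProb (G : RTree) (σ : List (List Bool)) (v : List Bool) : ℝ :=
  ((σ.take (σ.idxOf v + 1)).map (pAt G)).prod

/-- `P(x,σ) = Σ_v x(v) P(v,σ)` for a distribution `x` on the vertices. -/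
def payoffD (G : RTree) (x : List Bool → ℝ) (σ : List (List Bool)) : ℝ :=
  (σ.map (fun v => x v * capProb G σ v)).sum

end RTree
namespace RTree

/-- prefix products -/
def PP (p : List Bool → ℝ) (s : List (List Bool)) : ℝ := (s.map p).prod

/-- sequential payoff -/
def SP (p x : List Bool → ℝ) : List (List Bool) → ℝ
  | [] => 0
  | a :: s => p a * (x a + SP p x s)

lemma PP_nil (p : List Bool → ℝ) : PP p [] = 1 := rfl
lemma PP_cons (p : List Bool → ℝ) (a s) : PP p (a :: s) = p a * PP p s := by
  simp [PP]
lemma PP_append (p : List Bool → ℝ) (s t) : PP p (s ++ t) = PP p s * PP p t := by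
  simp [PP]
lemma SP_append (p x : List Bool → ℝ) (s t) :
    SP p x (s ++ t) = SP p x s + PP p s * SP p x t := by
  induction s with
  | nil => simp [SP, PP]
  | cons a s ih => simp [SP, PP_cons, ih]; ring

lemma pAt_pos {G : RTree} (hG : G.valid) (v : List Bool) : 0 < pAt G v := by
  induction G generalizing v with
  | leaf p => exact hG.1
  | node1 p G' ih =>
    cases v with
    | nil => exact hG.1.1
    | cons b l => exact ih hG.2 l
  | node2 p G₁ G₂ ih₁ ih₂ =>
    cases v with
    | nil => exact hG.1.1
    | cons b l => cases b with
      | false => exact ih₁ hG.2.1 l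
      | true => exact ih₂ hG.2.2 l

lemma pAt_le_one {G : RTree} (hG : G.valid) (v : List Bool) : pAt G v ≤ 1 := by
  induction G generalizing v with
  | leaf p => exact le_of_lt hG.2
  | node1 p G' ih =>
    cases v with
    | nil => exact hG.1.2
    | cons b l => exact ih hG.2 l
  | node2 p G₁ G₂ ih₁ ih₂ =>
    cases v with
    | nil => exact hG.1.2
    | cons b l => cases b with
      | false => exact ih₁ hG.2.1 l
      | true => exact ih₂ hG.2.2 l

lemma piT_pos {G : RTree} (hG : G.valid) : 0 < piT G := by
  induction G with
  | leaf p => exact hG.1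
  | node1 p G' ih => exact mul_pos hG.1.1 (ih hG.2)
  | node2 p G₁ G₂ ih₁ ih₂ => exact mul_pos hG.1.1 (mul_pos (ih₁ hG.2.1) (ih₂ hG.2.2))

lemma piT_lt_one {G : RTree} (hG : G.valid) : piT G < 1 := by
  induction G with
  | leaf p => exact hG.2
  | node1 p G' ih =>
    have h1 := ih hG.2
    have h2 := piT_pos hG.2
    calc piT (node1 p G') = p * piT G' := rfl
      _ ≤ 1 * piT G' := by nlinarith [hG.1.1, hG.1.2]
      _ < 1 := by nlinarith
  | node2 p G₁ G₂ ih₁ ih₂ =>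
    have h1 := ih₁ hG.2.1
    have h2 := ih₂ hG.2.2
    have h3 := piT_pos hG.2.1
    have h4 := piT_pos hG.2.2
    calc piT (node2 p G₁ G₂) = p * (piT G₁ * piT G₂) := rfl
      _ ≤ 1 * (piT G₁ * piT G₂) := by nlinarith [hG.1.1, hG.1.2, mul_pos h3 h4]
      _ < 1 := by nlinarith [mul_pos h3 h4]

lemma valT_pos {G : RTree} (hG : G.valid) : 0 < valT G := by
  induction G with
  | leaf p => exact hG.1
  | node1 p G' ih => exact mul_pos hG.1.1 (ih hG.2)
  | node2 p G₁ G₂ ih₁ ih₂ =>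
    have h1 := piT_lt_one hG.2.1
    have h2 := piT_lt_one hG.2.2
    have h3 := piT_pos hG.2.1
    have h4 := piT_pos hG.2.2
    have v1 := ih₁ hG.2.1
    have v2 := ih₂ hG.2.2
    have hs : 0 < (1 - piT G₁) / valT G₁ + (1 - piT G₂) / valT G₂ :=
      add_pos (div_pos (by linarith) v1) (div_pos (by linarith) v2)
    show 0 < p * _ * (1 - piT G₁ * piT G₂)
    have hi : (0:ℝ) < ((1 - piT G₁) / valT G₁ + (1 - piT G₂) / valT G₂)⁻¹ := inv_pos.mpr hs
    have : piT G₁ * piT G₂ < 1 := by nlinarith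
    exact mul_pos (mul_pos hG.1.1 hi) (by linarith)

lemma lamT_pos {G₁ G₂ : RTree} (h₁ : G₁.valid) (h₂ : G₂.valid) : 0 < lamT G₁ G₂ := by
  have k1 := piT_lt_one h₁; have k2 := piT_lt_one h₂
  have v1 := valT_pos h₁; have v2 := valT_pos h₂
  exact inv_pos.mpr (add_pos (div_pos (by linarith) v1) (div_pos (by linarith) v2))

lemma hide_nonneg {G : RTree} (hG : G.valid) (v : List Bool) : 0 ≤ hide G v := by
  induction G generalizing v with
  | leaf p => cases v with
    | nil => norm_num [hide]
    | cons b l => simp [hide]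
  | node1 p G' ih =>
    cases v with
    | nil => simp [hide]
    | cons b l => cases b with
      | false => exact ih hG.2 l
      | true => simp [hide]
  | node2 p G₁ G₂ ih₁ ih₂ =>
    have l0 := lamT_pos hG.2.1 hG.2.2
    have := piT_lt_one hG.2.1; have := piT_lt_one hG.2.2
    have := valT_pos hG.2.1; have := valT_pos hG.2.2
    cases v with
    | nil => simp [hide]
    | cons b l => cases b with
      | false =>
        show 0 ≤ lamT G₁ G₂ * ((1 - piT G₁) / valT G₁) * hide G₁ l
        exact mul_nonneg (mul_nonneg l0.le (div_nonneg (by linarith) (by linarith)))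
          (ih₁ hG.2.1 l)
      | true =>
        show 0 ≤ lamT G₁ G₂ * ((1 - piT G₂) / valT G₂) * hide G₂ l
        exact mul_nonneg (mul_nonneg l0.le (div_nonneg (by linarith) (by linarith)))
          (ih₂ hG.2.2 l)

lemma SP_nonneg {G : RTree} (hG : G.valid) (s : List (List Bool)) :
    0 ≤ SP (pAt G) (hide G) s := by
  induction s with
  | nil => exact le_refl 0
  | cons a s ih =>
    have h1 := pAt_pos hG a
    have h2 := hide_nonneg hG a
    show 0 ≤ pAt G a * (hide G a + SP (pAt G) (hide G) s)
    exact mul_nonneg h1.le (by linarith)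

lemma PP_pos {G : RTree} (hG : G.valid) (s : List (List Bool)) :
    0 < PP (pAt G) s := by
  induction s with
  | nil => norm_num [PP_nil]
  | cons a s ih => rw [PP_cons]; exact mul_pos (pAt_pos hG a) ih

lemma PP_le_one {G : RTree} (hG : G.valid) (s : List (List Bool)) :
    PP (pAt G) s ≤ 1 := by
  induction s with
  | nil => norm_num [PP_nil]
  | cons a s ih =>
    rw [PP_cons]
    nlinarith [pAt_pos hG a, pAt_le_one hG a, PP_pos hG s]

end RTree
namespace RTree

/-- strip the elements of branch `b`, removing the tag -/
def untag (b : Bool) : List (List Bool) → List (List Bool) :=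
  List.filterMap (fun a => if a.head? = some b then some a.tail else none)

@[simp] lemma untag_nil (b : Bool) : untag b [] = [] := rfl

@[simp] lemma untag_ff (l : List Bool) (s : List (List Bool)) :
    untag false ((false :: l) :: s) = l :: untag false s := by
  simp [untag, List.filterMap_cons]
@[simp] lemma untag_tf (l : List Bool) (s : List (List Bool)) :
    untag false ((true :: l) :: s) = untag false s := by
  simp [untag, List.filterMap_cons]
@[simp] lemma untag_ft (l : List Bool) (s : List (List Bool)) :
    untag true ((false :: l) :: s) = untag true s := by
  simp [untag, List.filterMap_cons]
@[simp] lemma untag_tt (l : List Bool) (s : List (List Bool)) :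
    untag true ((true :: l) :: s) = l :: untag true s := by
  simp [untag, List.filterMap_cons]

lemma untag_append (b : Bool) (s t : List (List Bool)) :
    untag b (s ++ t) = untag b s ++ untag b t := by
  simp [untag, List.filterMap_append]

/-- partial (prefix of an) expanding search -/
inductive Pre : RTree → List (List Bool) → Prop
  | nil (G) : Pre G []
  | leaf (p) : Pre (leaf p) [[]]
  | node1 (p G' σ') : Pre G' σ' → Pre (node1 p G') ([] :: σ'.map (List.cons false))
  | node2 (p G₁ G₂ s) : (∀ a ∈ s, a ≠ []) → Pre G₁ (untag false s) →
      Pre G₂ (untag true s) → Pre (node2 p G₁ G₂) ([] :: s)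

lemma Pre.of_prefix {G σ} (h : Pre G σ) : ∀ {τ}, τ <+: σ → Pre G τ := by
  induction h with
  | nil G =>
    intro τ hpre
    rw [List.prefix_nil.mp hpre]; exact Pre.nil _
  | leaf p =>
    intro τ hpre
    rcases hpre with ⟨t, ht⟩
    cases τ with
    | nil => exact Pre.nil _
    | cons a τ' =>
      simp only [List.cons_append, List.cons.injEq] at ht
      obtain ⟨rfl, ht⟩ := ht
      have : τ' = [] := by
        cases τ' with
        | nil => rfl
        | cons b τ'' => simp at ht
      subst this; exact Pre.leaf p
  | node1 p G' σ' hσ' ih =>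
    intro τ hpre
    rcases hpre with ⟨t, ht⟩
    cases τ with
    | nil => exact Pre.nil _
    | cons a τ' =>
      simp only [List.cons_append, List.cons.injEq] at ht
      obtain ⟨rfl, ht⟩ := ht
      have hp : τ' <+: σ'.map (List.cons false) := ⟨t, ht⟩
      rw [List.prefix_iff_eq_take] at hp
      rw [hp, ← List.map_take]
      exact Pre.node1 _ _ _ (ih (List.take_prefix _ _))
  | node2 p G₁ G₂ s hne h₁ h₂ ih₁ ih₂ =>
    intro τ hpre
    rcases hpre with ⟨t, ht⟩
    cases τ with
    | nil => exact Pre.nil _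
    | cons a τ' =>
      simp only [List.cons_append, List.cons.injEq] at ht
      obtain ⟨rfl, ht⟩ := ht
      refine Pre.node2 _ _ _ _ (fun a ha => hne a ?_) (ih₁ ?_) (ih₂ ?_)
      · rw [← ht]; exact List.mem_append_left _ ha
      · exact ⟨untag false t, by rw [← untag_append, ht]⟩
      · exact ⟨untag true t, by rw [← untag_append, ht]⟩

lemma PP_map1 (p : ℝ) (G' : RTree) (s : List (List Bool)) :
    PP (pAt (node1 p G')) (s.map (List.cons false)) = PP (pAt G') s := by
  simp only [PP, List.map_map]; rfl

lemma SP_map1 (p : ℝ) (G' : RTree) (s : List (List Bool)) :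
    SP (pAt (node1 p G')) (hide (node1 p G')) (s.map (List.cons false))
      = SP (pAt G') (hide G') s := by
  induction s with
  | nil => rfl
  | cons a s ih =>
    show pAt (node1 p G') (false :: a) * (hide (node1 p G') (false :: a) + _)
      = pAt G' a * (hide G' a + _)
    rw [ih]; rfl

lemma PP_split (p : ℝ) (G₁ G₂ : RTree) :
    ∀ u : List (List Bool), (∀ a ∈ u, a ≠ []) →
      PP (pAt (node2 p G₁ G₂)) u
        = PP (pAt G₁) (untag false u) * PP (pAt G₂) (untag true u) := by
  intro u hu
  induction u with
  | nil => simp [PP_nil]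
  | cons a u ihu =>
    have ha : a ≠ [] := hu a (by simp)
    obtain ⟨c, l, rfl⟩ : ∃ c l, a = c :: l := by
      cases a with
      | nil => exact absurd rfl ha
      | cons c l => exact ⟨c, l, rfl⟩
    have hrec := ihu (fun a ha' => hu a (by simp [ha']))
    cases c with
    | false =>
      rw [PP_cons, untag_ff, untag_ft, PP_cons, hrec]
      show pAt G₁ l * _ = _
      ring
    | true =>
      rw [PP_cons, untag_tf, untag_tt, PP_cons, hrec]
      show pAt G₂ l * _ = _
      ring

lemma Pre_PP_ge {G σ} (h : Pre G σ) (hG : G.valid) : piT G ≤ PP (pAt G) σ := by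
  induction h with
  | nil G => exact le_of_lt (by simpa [PP_nil] using piT_lt_one hG)
  | leaf p => simp [PP, pAt, piT]
  | node1 p G' σ' hσ' ih =>
    rw [PP_cons, PP_map1]
    show p * piT G' ≤ pAt (node1 p G') [] * PP (pAt G') σ'
    show p * piT G' ≤ p * PP (pAt G') σ'
    have := ih hG.2
    nlinarith [hG.1.1, piT_pos hG.2]
  | node2 p G₁ G₂ s hne h₁ h₂ ih₁ ih₂ =>
    rw [PP_cons, PP_split p G₁ G₂ s hne]
    show p * (piT G₁ * piT G₂) ≤ p * _
    have a₁ := ih₁ hG.2.1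
    have a₂ := ih₂ hG.2.2
    have b₁ := piT_pos hG.2.1
    have b₂ := piT_pos hG.2.2
    have c₂ := PP_pos hG.2.2 (untag true s)
    have key : piT G₁ * piT G₂ ≤ PP (pAt G₁) (untag false s) * PP (pAt G₂) (untag true s) :=
      mul_le_mul a₁ a₂ b₂.le (by linarith)
    nlinarith [hG.1.1]

end RTree
namespace RTree

@[simp] lemma SP_nil (p x : List Bool → ℝ) : SP p x [] = 0 := rfl
lemma SP_cons (p x : List Bool → ℝ) (a s) : SP p x (a :: s) = p a * (x a + SP p x s) := rfl
lemma SP_singleton (p x : List Bool → ℝ) (a) : SP p x [a] = p a * x a := by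
  rw [SP_cons]; simp

lemma rate_key {p V π q : ℝ} (hp0 : 0 < p) (hp1 : p ≤ 1) (hV : 0 < V) (hπ0 : 0 < π)
    (hπ1 : π < 1) (hq : π ≤ q) (hq1 : q ≤ 1) :
    p * (V / (1 - π) * (1 - q)) ≤ p * V / (1 - p * π) * (1 - p * q) := by
  have h1 : (0:ℝ) < 1 - π := by linarith
  have h2 : (0:ℝ) < 1 - p * π := by nlinarith
  have e1 : p * (V / (1 - π) * (1 - q)) = p * V * (1 - q) / (1 - π) := by ring
  have e2 : p * V / (1 - p * π) * (1 - p * q) = p * V * (1 - p * q) / (1 - p * π) := by ring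
  rw [e1, e2, div_le_div_iff₀ h1 h2]
  nlinarith [mul_nonneg (mul_nonneg (mul_pos hp0 hV).le (sub_nonneg.mpr hp1))
    (sub_nonneg.mpr hq)]

lemma merge_bound {G₁ G₂ : RTree} (hv₁ : G₁.valid) (hv₂ : G₂.valid) (p : ℝ)
    (IH₁ : ∀ τ, Pre G₁ τ → SP (pAt G₁) (hide G₁) τ
        ≤ valT G₁ / (1 - piT G₁) * (1 - PP (pAt G₁) τ))
    (IH₂ : ∀ τ, Pre G₂ τ → SP (pAt G₂) (hide G₂) τ
        ≤ valT G₂ / (1 - piT G₂) * (1 - PP (pAt G₂) τ)) :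
    ∀ s : List (List Bool), (∀ a ∈ s, a ≠ []) → Pre G₁ (untag false s) →
      Pre G₂ (untag true s) →
      SP (pAt (node2 p G₁ G₂)) (hide (node2 p G₁ G₂)) s ≤
        lamT G₁ G₂ * ((1 - PP (pAt G₁) (untag false s)) * (1 - PP (pAt G₂) (untag true s)))
          + PP (pAt G₂) (untag true s) *
              (lamT G₁ G₂ * ((1 - piT G₁) / valT G₁) * SP (pAt G₁) (hide G₁) (untag false s))
          + PP (pAt G₁) (untag false s) *
              (lamT G₁ G₂ * ((1 - piT G₂) / valT G₂) * SP (pAt G₂) (hide G₂) (untag true s)) := by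
  have hL := lamT_pos hv₁ hv₂
  have hπ₁ := piT_lt_one hv₁
  have hπ₂ := piT_lt_one hv₂
  have hV₁ := valT_pos hv₁
  have hV₂ := valT_pos hv₂
  intro s
  induction s using List.reverseRecOn with
  | nil => intro _ _ _; norm_num [PP_nil]
  | append_singleton s' a ih =>
    intro hne hp₁ hp₂
    obtain ⟨c, l, rfl⟩ : ∃ c l, a = c :: l := by
      cases a with
      | nil => exact absurd rfl (hne [] (by simp))
      | cons c l => exact ⟨c, l, rfl⟩
    have hne' : ∀ x ∈ s', x ≠ [] := fun x hx => hne x (List.mem_append_left _ hx)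
    have hpre₁ : Pre G₁ (untag false s') :=
      hp₁.of_prefix ⟨untag false [c :: l], (untag_append _ _ _).symm⟩
    have hpre₂ : Pre G₂ (untag true s') :=
      hp₂.of_prefix ⟨untag true [c :: l], (untag_append _ _ _).symm⟩
    have HI := ih hne' hpre₁ hpre₂
    have hsplit := PP_split p G₁ G₂ s' hne'
    have hQ₁ := PP_pos hv₁ (untag false s')
    have hQ₂ := PP_pos hv₂ (untag true s')
    have hQ₁' := PP_le_one hv₁ (untag false s')
    have hQ₂' := PP_le_one hv₂ (untag true s')
    have hS₁ := SP_nonneg hv₁ (untag false s')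
    have hS₂ := SP_nonneg hv₂ (untag true s')
    -- bound on already-searched branch payoffs
    have hd₁ : (1:ℝ) - piT G₁ ≠ 0 := by linarith
    have hd₂ : (1:ℝ) - piT G₂ ≠ 0 := by linarith
    have hw₁ : lamT G₁ G₂ * ((1 - piT G₁) / valT G₁) * (valT G₁ / (1 - piT G₁))
        = lamT G₁ G₂ := by
      field_simp
    have hw₂ : lamT G₁ G₂ * ((1 - piT G₂) / valT G₂) * (valT G₂ / (1 - piT G₂))
        = lamT G₁ G₂ := by
      field_simp
    have hw₁0 : 0 ≤ lamT G₁ G₂ * ((1 - piT G₁) / valT G₁) :=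
      mul_nonneg hL.le (div_nonneg (by linarith) hV₁.le)
    have hw₂0 : 0 ≤ lamT G₁ G₂ * ((1 - piT G₂) / valT G₂) :=
      mul_nonneg hL.le (div_nonneg (by linarith) hV₂.le)
    have hF₁ : lamT G₁ G₂ * ((1 - piT G₁) / valT G₁) * SP (pAt G₁) (hide G₁) (untag false s')
        ≤ lamT G₁ G₂ * (1 - PP (pAt G₁) (untag false s')) := by
      calc lamT G₁ G₂ * ((1 - piT G₁) / valT G₁) * SP (pAt G₁) (hide G₁) (untag false s')
          ≤ lamT G₁ G₂ * ((1 - piT G₁) / valT G₁) *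
            (valT G₁ / (1 - piT G₁) * (1 - PP (pAt G₁) (untag false s'))) :=
            mul_le_mul_of_nonneg_left (IH₁ _ hpre₁) hw₁0
        _ = lamT G₁ G₂ * (1 - PP (pAt G₁) (untag false s')) := by rw [← mul_assoc, hw₁]
    have hF₂ : lamT G₁ G₂ * ((1 - piT G₂) / valT G₂) * SP (pAt G₂) (hide G₂) (untag true s')
        ≤ lamT G₁ G₂ * (1 - PP (pAt G₂) (untag true s')) := by
      calc lamT G₁ G₂ * ((1 - piT G₂) / valT G₂) * SP (pAt G₂) (hide G₂) (untag true s')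
          ≤ lamT G₁ G₂ * ((1 - piT G₂) / valT G₂) *
            (valT G₂ / (1 - piT G₂) * (1 - PP (pAt G₂) (untag true s'))) :=
            mul_le_mul_of_nonneg_left (IH₂ _ hpre₂) hw₂0
        _ = lamT G₁ G₂ * (1 - PP (pAt G₂) (untag true s')) := by rw [← mul_assoc, hw₂]
    cases c with
    | false =>
      have hu₁ : untag false (s' ++ [false :: l]) = untag false s' ++ [l] := by
        rw [untag_append]; rfl
      have hu₂ : untag true (s' ++ [false :: l]) = untag true s' := by
        rw [untag_append]; simp
      rw [hu₁, hu₂, SP_append, SP_append, PP_append, SP_singleton, SP_singleton, hsplit]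
      have ep : pAt (node2 p G₁ G₂) (false :: l) = pAt G₁ l := rfl
      have eh : hide (node2 p G₁ G₂) (false :: l)
          = lamT G₁ G₂ * ((1 - piT G₁) / valT G₁) * hide G₁ l := rfl
      have ePP : PP (pAt G₁) [l] = pAt G₁ l := by simp [PP]
      rw [ep, eh, ePP]
      have hpl0 := pAt_pos hv₁ l
      have hpl1 := pAt_le_one hv₁ l
      have hhl := hide_nonneg hv₁ l
      have hint : 0 ≤ PP (pAt G₁) (untag false s') * (1 - pAt G₁ l) *
          (lamT G₁ G₂ * (1 - PP (pAt G₂) (untag true s'))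
            - lamT G₁ G₂ * ((1 - piT G₂) / valT G₂) * SP (pAt G₂) (hide G₂) (untag true s')) :=
        mul_nonneg (mul_nonneg hQ₁.le (by linarith)) (by linarith)
      nlinarith [HI, hint]
    | true =>
      have hu₁ : untag false (s' ++ [true :: l]) = untag false s' := by
        rw [untag_append]; simp
      have hu₂ : untag true (s' ++ [true :: l]) = untag true s' ++ [l] := by
        rw [untag_append]; rfl
      rw [hu₁, hu₂, SP_append, SP_append, PP_append, SP_singleton, SP_singleton, hsplit]
      have ep : pAt (node2 p G₁ G₂) (true :: l) = pAt G₂ l := rfl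
      have eh : hide (node2 p G₁ G₂) (true :: l)
          = lamT G₁ G₂ * ((1 - piT G₂) / valT G₂) * hide G₂ l := rfl
      have ePP : PP (pAt G₂) [l] = pAt G₂ l := by simp [PP]
      rw [ep, eh, ePP]
      have hpl0 := pAt_pos hv₂ l
      have hpl1 := pAt_le_one hv₂ l
      have hhl := hide_nonneg hv₂ l
      have hint : 0 ≤ PP (pAt G₂) (untag true s') * (1 - pAt G₂ l) *
          (lamT G₁ G₂ * (1 - PP (pAt G₁) (untag false s'))
            - lamT G₁ G₂ * ((1 - piT G₁) / valT G₁) * SP (pAt G₁) (hide G₁) (untag false s')) :=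
        mul_nonneg (mul_nonneg hQ₂.le (by linarith)) (by linarith)
      nlinarith [HI, hint]

set_option maxHeartbeats 1000000 in
lemma pre_bound {G : RTree} (hG : G.valid) : ∀ {σ}, Pre G σ →
    SP (pAt G) (hide G) σ ≤ valT G / (1 - piT G) * (1 - PP (pAt G) σ) := by
  induction G with
  | leaf p =>
    intro σ h
    have h1 : (1:ℝ) - p ≠ 0 := by have := hG.2; intro hc; linarith
    cases h with
    | nil => simp only [SP_nil, PP_nil, sub_self, mul_zero]; exact le_refl 0
    | leaf =>
      have e1 : SP (pAt (leaf p)) (hide (leaf p)) [[]] = p := by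
        rw [SP_singleton]; show p * 1 = p; ring
      have e2 : PP (pAt (leaf p)) [[]] = p := by simp [PP]; rfl
      rw [e1, e2]
      show p ≤ p / (1 - p) * (1 - p)
      field_simp
      exact le_refl p
  | node1 p G' ih =>
    intro σ h
    cases h with
    | nil => simp only [SP_nil, PP_nil, sub_self, mul_zero]; exact le_refl 0
    | node1 _ _ σ' h' =>
      have hp0 : 0 < p := hG.1.1
      have hπ' := piT_lt_one hG.2
      have hπ'0 := piT_pos hG.2
      have hq := Pre_PP_ge h' hG.2
      have hq1 := PP_le_one hG.2 σ'
      rw [SP_cons, PP_cons, PP_map1, SP_map1]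
      have e0 : hide (node1 p G') [] = 0 := rfl
      have e1 : pAt (node1 p G') [] = p := rfl
      rw [e0, e1]
      show p * (0 + SP (pAt G') (hide G') σ')
        ≤ p * valT G' / (1 - p * piT G') * (1 - p * PP (pAt G') σ')
      have step1 : p * (0 + SP (pAt G') (hide G') σ')
          ≤ p * (valT G' / (1 - piT G') * (1 - PP (pAt G') σ')) := by
        have := ih hG.2 h'
        nlinarith
      exact le_trans step1 (rate_key hp0 hG.1.2 (valT_pos hG.2) hπ'0 hπ' hq hq1)
  | node2 p G₁ G₂ ih₁ ih₂ =>
    intro σ h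
    cases h with
    | nil => simp only [SP_nil, PP_nil, sub_self, mul_zero]; exact le_refl 0
    | node2 _ _ _ s hne h₁ h₂ =>
      have hv₁ := hG.2.1
      have hv₂ := hG.2.2
      have hp0 : 0 < p := hG.1.1
      have hL := lamT_pos hv₁ hv₂
      have hπ₁ := piT_lt_one hv₁
      have hπ₂ := piT_lt_one hv₂
      have hπ₁0 := piT_pos hv₁
      have hπ₂0 := piT_pos hv₂
      have hQ₁ := PP_pos hv₁ (untag false s)
      have hQ₂ := PP_pos hv₂ (untag true s)
      have hQ₁' := PP_le_one hv₁ (untag false s)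
      have hQ₂' := PP_le_one hv₂ (untag true s)
      have hmb := merge_bound hv₁ hv₂ p (fun τ ht => ih₁ hv₁ ht) (fun τ ht => ih₂ hv₂ ht)
        s hne h₁ h₂
      -- combine with saturation bounds
      have hw₁0 : 0 ≤ lamT G₁ G₂ * ((1 - piT G₁) / valT G₁) :=
        mul_nonneg hL.le (div_nonneg (by linarith) (valT_pos hv₁).le)
      have hw₁ : lamT G₁ G₂ * ((1 - piT G₁) / valT G₁) * (valT G₁ / (1 - piT G₁))
          = lamT G₁ G₂ := by
        have h0 := valT_pos hv₁
        have hd : (1:ℝ) - piT G₁ ≠ 0 := by linarith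
        field_simp
      have hF₁ : lamT G₁ G₂ * ((1 - piT G₁) / valT G₁) * SP (pAt G₁) (hide G₁) (untag false s)
          ≤ lamT G₁ G₂ * (1 - PP (pAt G₁) (untag false s)) := by
        calc lamT G₁ G₂ * ((1 - piT G₁) / valT G₁) * SP (pAt G₁) (hide G₁) (untag false s)
            ≤ lamT G₁ G₂ * ((1 - piT G₁) / valT G₁) *
              (valT G₁ / (1 - piT G₁) * (1 - PP (pAt G₁) (untag false s))) :=
              mul_le_mul_of_nonneg_left (ih₁ hv₁ h₁) hw₁0
          _ = _ := by rw [← mul_assoc, hw₁]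
      have hw₂0 : 0 ≤ lamT G₁ G₂ * ((1 - piT G₂) / valT G₂) :=
        mul_nonneg hL.le (div_nonneg (by linarith) (valT_pos hv₂).le)
      have hw₂ : lamT G₁ G₂ * ((1 - piT G₂) / valT G₂) * (valT G₂ / (1 - piT G₂))
          = lamT G₁ G₂ := by
        have h0 := valT_pos hv₂
        have hd : (1:ℝ) - piT G₂ ≠ 0 := by linarith
        field_simp
      have hF₂ : lamT G₁ G₂ * ((1 - piT G₂) / valT G₂) * SP (pAt G₂) (hide G₂) (untag true s)
          ≤ lamT G₁ G₂ * (1 - PP (pAt G₂) (untag true s)) := by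
        calc lamT G₁ G₂ * ((1 - piT G₂) / valT G₂) * SP (pAt G₂) (hide G₂) (untag true s)
            ≤ lamT G₁ G₂ * ((1 - piT G₂) / valT G₂) *
              (valT G₂ / (1 - piT G₂) * (1 - PP (pAt G₂) (untag true s))) :=
              mul_le_mul_of_nonneg_left (ih₂ hv₂ h₂) hw₂0
          _ = _ := by rw [← mul_assoc, hw₂]
      have hSP : SP (pAt (node2 p G₁ G₂)) (hide (node2 p G₁ G₂)) s
          ≤ lamT G₁ G₂ * (1 - PP (pAt G₁) (untag false s) * PP (pAt G₂) (untag true s)) := by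
        nlinarith [hmb, hF₁, hF₂]
      rw [SP_cons, PP_cons, PP_split p G₁ G₂ s hne]
      have e0 : hide (node2 p G₁ G₂) [] = 0 := rfl
      have e1 : pAt (node2 p G₁ G₂) [] = p := rfl
      rw [e0, e1]
      show p * (0 + SP (pAt (node2 p G₁ G₂)) (hide (node2 p G₁ G₂)) s)
        ≤ p * lamT G₁ G₂ * (1 - piT G₁ * piT G₂) / (1 - p * (piT G₁ * piT G₂))
          * (1 - p * (PP (pAt G₁) (untag false s) * PP (pAt G₂) (untag true s)))
      have hπ0 : 0 < piT G₁ * piT G₂ := mul_pos hπ₁0 hπ₂0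
      have hπ1 : piT G₁ * piT G₂ < 1 := by nlinarith
      have hqge : piT G₁ * piT G₂
          ≤ PP (pAt G₁) (untag false s) * PP (pAt G₂) (untag true s) :=
        mul_le_mul (Pre_PP_ge h₁ hv₁) (Pre_PP_ge h₂ hv₂) hπ₂0.le (by linarith)
      have hqle : PP (pAt G₁) (untag false s) * PP (pAt G₂) (untag true s) ≤ 1 := by
        nlinarith
      have hVpos : 0 < lamT G₁ G₂ * (1 - piT G₁ * piT G₂) := by nlinarith
      have step1 : p * (0 + SP (pAt (node2 p G₁ G₂)) (hide (node2 p G₁ G₂)) s)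
          ≤ p * (lamT G₁ G₂ * (1 - piT G₁ * piT G₂) / (1 - piT G₁ * piT G₂)
            * (1 - PP (pAt G₁) (untag false s) * PP (pAt G₂) (untag true s))) := by
        have e : lamT G₁ G₂ * (1 - piT G₁ * piT G₂) / (1 - piT G₁ * piT G₂)
            = lamT G₁ G₂ := by
          have hd : (1:ℝ) - piT G₁ * piT G₂ ≠ 0 := by nlinarith
          field_simp
        rw [e]
        nlinarith [hSP]
      have step2 := rate_key hp0 hG.1.2 hVpos hπ0 hπ1 hqge hqle
      calc p * (0 + SP (pAt (node2 p G₁ G₂)) (hide (node2 p G₁ G₂)) s)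
          ≤ _ := step1
        _ ≤ p * (lamT G₁ G₂ * (1 - piT G₁ * piT G₂)) / (1 - p * (piT G₁ * piT G₂))
            * (1 - p * (PP (pAt G₁) (untag false s) * PP (pAt G₂) (untag true s))) := step2
        _ = p * lamT G₁ G₂ * (1 - piT G₁ * piT G₂) / (1 - p * (piT G₁ * piT G₂))
            * (1 - p * (PP (pAt G₁) (untag false s) * PP (pAt G₂) (untag true s))) := by
            ring

end RTree
namespace RTree

lemma PP_map2f (p : ℝ) (G₁ G₂ : RTree) (s : List (List Bool)) :
    PP (pAt (node2 p G₁ G₂)) (s.map (List.cons false)) = PP (pAt G₁) s := by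
  simp only [PP, List.map_map]; rfl

lemma PP_map2t (p : ℝ) (G₁ G₂ : RTree) (s : List (List Bool)) :
    PP (pAt (node2 p G₁ G₂)) (s.map (List.cons true)) = PP (pAt G₂) s := by
  simp only [PP, List.map_map]; rfl

lemma SP_map2f (p : ℝ) (G₁ G₂ : RTree) (s : List (List Bool)) :
    SP (pAt (node2 p G₁ G₂)) (hide (node2 p G₁ G₂)) (s.map (List.cons false))
      = lamT G₁ G₂ * ((1 - piT G₁) / valT G₁) * SP (pAt G₁) (hide G₁) s := by
  induction s with
  | nil => simp
  | cons a s ih =>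
    show pAt G₁ a * (lamT G₁ G₂ * ((1 - piT G₁) / valT G₁) * hide G₁ a + _) = _
    rw [ih, SP_cons]; ring

lemma SP_map2t (p : ℝ) (G₁ G₂ : RTree) (s : List (List Bool)) :
    SP (pAt (node2 p G₁ G₂)) (hide (node2 p G₁ G₂)) (s.map (List.cons true))
      = lamT G₁ G₂ * ((1 - piT G₂) / valT G₂) * SP (pAt G₂) (hide G₂) s := by
  induction s with
  | nil => simp
  | cons a s ih =>
    show pAt G₂ a * (lamT G₁ G₂ * ((1 - piT G₂) / valT G₂) * hide G₂ a + _) = _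
    rw [ih, SP_cons]; ring

lemma PP_verts (G : RTree) : PP (pAt G) (verts G) = piT G := by
  induction G with
  | leaf p =>
    show PP (pAt (leaf p)) [[]] = p
    show pAt (leaf p) [] * 1 = p
    show p * 1 = p
    ring
  | node1 p G' ih =>
    show PP (pAt (node1 p G')) ([] :: (verts G').map (List.cons false)) = p * piT G'
    rw [PP_cons, PP_map1, ih]; rfl
  | node2 p G₁ G₂ ih₁ ih₂ =>
    show PP (pAt (node2 p G₁ G₂))
      ([] :: ((verts G₁).map (List.cons false) ++ (verts G₂).map (List.cons true)))
      = p * (piT G₁ * piT G₂)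
    rw [PP_cons, PP_append, PP_map2f, PP_map2t, ih₁, ih₂]; rfl

/-- depth-first searches, inductively -/
inductive DFSi : RTree → List (List Bool) → Prop
  | leaf (p) : DFSi (leaf p) [[]]
  | node1 (p G' σ') : DFSi G' σ' → DFSi (node1 p G') ([] :: σ'.map (List.cons false))
  | node2a (p G₁ G₂ σ₁ σ₂) : DFSi G₁ σ₁ → DFSi G₂ σ₂ →
      DFSi (node2 p G₁ G₂) ([] :: (σ₁.map (List.cons false) ++ σ₂.map (List.cons true)))
  | node2b (p G₁ G₂ σ₁ σ₂) : DFSi G₁ σ₁ → DFSi G₂ σ₂ →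
      DFSi (node2 p G₁ G₂) ([] :: (σ₂.map (List.cons true) ++ σ₁.map (List.cons false)))

lemma DFSi_SP_eq {G σ} (h : DFSi G σ) (hG : G.valid) :
    SP (pAt G) (hide G) σ = valT G ∧ PP (pAt G) σ = piT G := by
  induction h with
  | leaf p =>
    constructor
    · rw [SP_singleton]; show p * 1 = p; ring
    · show PP (pAt (leaf p)) [[]] = p
      show p * 1 = p
      ring
  | node1 p G' σ' h' ih =>
    obtain ⟨e1, e2⟩ := ih hG.2
    constructor
    · rw [SP_cons, SP_map1, e1]
      show pAt (node1 p G') [] * (hide (node1 p G') [] + valT G') = p * valT G'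
      show p * (0 + valT G') = p * valT G'
      ring
    · rw [PP_cons, PP_map1, e2]; rfl
  | node2a p G₁ G₂ σ₁ σ₂ h₁ h₂ ih₁ ih₂ =>
    obtain ⟨e1, e2⟩ := ih₁ hG.2.1
    obtain ⟨f1, f2⟩ := ih₂ hG.2.2
    have hπ₁ := piT_lt_one hG.2.1
    have hπ₂ := piT_lt_one hG.2.2
    have hV₁ := valT_pos hG.2.1
    have hV₂ := valT_pos hG.2.2
    constructor
    · rw [SP_cons, SP_append, SP_map2f, SP_map2t, PP_map2f, e1, e2, f1]
      show p * (0 + _) = valT (node2 p G₁ G₂)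
      have hval : valT (node2 p G₁ G₂) = p * lamT G₁ G₂ * (1 - piT G₁ * piT G₂) := rfl
      rw [hval]
      field_simp
      ring
    · rw [PP_cons, PP_append, PP_map2f, PP_map2t, e2, f2]; rfl
  | node2b p G₁ G₂ σ₁ σ₂ h₁ h₂ ih₁ ih₂ =>
    obtain ⟨e1, e2⟩ := ih₁ hG.2.1
    obtain ⟨f1, f2⟩ := ih₂ hG.2.2
    have hπ₁ := piT_lt_one hG.2.1
    have hπ₂ := piT_lt_one hG.2.2
    have hV₁ := valT_pos hG.2.1
    have hV₂ := valT_pos hG.2.2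
    constructor
    · rw [SP_cons, SP_append, SP_map2f, SP_map2t, PP_map2t, e1, f1, f2]
      show p * (0 + _) = valT (node2 p G₁ G₂)
      have hval : valT (node2 p G₁ G₂) = p * lamT G₁ G₂ * (1 - piT G₁ * piT G₂) := rfl
      rw [hval]
      field_simp
      ring
    · rw [PP_cons, PP_append, PP_map2f, PP_map2t, e2, f2]
      show p * (piT G₂ * piT G₁) = p * (piT G₁ * piT G₂)
      ring

end RTree
namespace RTree

lemma verts_nodup (G : RTree) : (verts G).Nodup := by
  induction G with
  | leaf p => simp [verts]
  | node1 p G' ih =>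
    refine List.Nodup.cons ?_ (ih.map (fun a b h => by simpa using h))
    intro hmem
    obtain ⟨l, _, hl⟩ := List.mem_map.mp hmem
    exact List.cons_ne_nil _ _ hl
  | node2 p G₁ G₂ ih₁ ih₂ =>
    refine List.Nodup.cons ?_ ?_
    · intro hmem
      rcases List.mem_append.mp hmem with h | h <;>
        · obtain ⟨l, _, hl⟩ := List.mem_map.mp h
          exact List.cons_ne_nil _ _ hl
    · refine List.Nodup.append (ih₁.map (fun a b h => by simpa using h))
        (ih₂.map (fun a b h => by simpa using h)) ?_
      intro a ha hb
      obtain ⟨l, _, hl⟩ := List.mem_map.mp ha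
      obtain ⟨l', _, hl'⟩ := List.mem_map.mp hb
      rw [← hl] at hl'
      simp at hl'

lemma nil_mem_verts (G : RTree) : [] ∈ verts G := by
  cases G <;> simp [verts]

lemma verts_dropLast {G : RTree} : ∀ v ∈ verts G, v ≠ [] → v.dropLast ∈ verts G := by
  induction G with
  | leaf p => intro v hv hne; simp [verts] at hv; exact absurd hv hne
  | node1 p G' ih =>
    intro v hv hne
    rcases (by simpa [verts] using hv : v = [] ∨ _) with h | h
    · exact absurd h hne
    · obtain ⟨l, hl, rfl⟩ := h
      cases l with
      | nil => simp [verts]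
      | cons c t =>
        have : (false :: c :: t).dropLast = false :: (c :: t).dropLast := rfl
        rw [this]
        have := ih _ hl (List.cons_ne_nil _ _)
        exact List.mem_cons_of_mem _ (List.mem_map_of_mem this)
  | node2 p G₁ G₂ ih₁ ih₂ =>
    intro v hv hne
    rcases (by simpa [verts] using hv :
        v = [] ∨ (∃ l ∈ verts G₁, false :: l = v) ∨ ∃ l ∈ verts G₂, true :: l = v) with
      h | h | h
    · exact absurd h hne
    · obtain ⟨l, hl, rfl⟩ := h
      cases l with
      | nil => simp [verts]
      | cons c t =>
        have e : (false :: c :: t).dropLast = false :: (c :: t).dropLast := rfl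
        rw [e]
        have := ih₁ _ hl (List.cons_ne_nil _ _)
        exact List.mem_cons_of_mem _
          (List.mem_append_left _ (List.mem_map_of_mem this))
    · obtain ⟨l, hl, rfl⟩ := h
      cases l with
      | nil => simp [verts]
      | cons c t =>
        have e : (true :: c :: t).dropLast = true :: (c :: t).dropLast := rfl
        rw [e]
        have := ih₂ _ hl (List.cons_ne_nil _ _)
        exact List.mem_cons_of_mem _
          (List.mem_append_right _ (List.mem_map_of_mem this))

section idx
variable {α : Type*} [BEq α] [LawfulBEq α]

lemma idx_cons_self (a : α) (l : List α) : (a :: l).idxOf a = 0 := by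
  simp [List.idxOf, List.findIdx_cons]

lemma idx_cons_ne {v a : α} (l : List α) (h : v ≠ a) :
    (a :: l).idxOf v = l.idxOf v + 1 := by
  have : (a == v) = false := beq_eq_false_iff_ne.mpr (Ne.symm h)
  simp [List.idxOf, List.findIdx_cons, this]

lemma idx_inj {l : List α} {x y : α} (hx : x ∈ l) (hy : y ∈ l)
    (h : l.idxOf x = l.idxOf y) : x = y := by
  induction l with
  | nil => exact absurd hx List.not_mem_nil
  | cons a l ih =>
    by_cases hxa : x = a
    · by_cases hya : y = a
      · rw [hxa, hya]
      · rw [hxa, idx_cons_self, idx_cons_ne l hya] at h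
        exact absurd h.symm (Nat.succ_ne_zero _)
    · by_cases hya : y = a
      · rw [hya, idx_cons_self, idx_cons_ne l hxa] at h
        exact absurd h (Nat.succ_ne_zero _)
      · rw [idx_cons_ne l hxa, idx_cons_ne l hya] at h
        exact ih (List.mem_of_ne_of_mem hxa hx) (List.mem_of_ne_of_mem hya hy)
          (Nat.succ_injective h)

end idx

lemma sum_map_mul_left {α : Type*} (s : List α) (f : α → ℝ) (c : ℝ) :
    (s.map fun v => c * f v).sum = c * (s.map f).sum := by
  induction s with
  | nil => simp
  | cons a s ih => simp [ih]; ring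

lemma payoffD_eq_SP {G : RTree} (x : List Bool → ℝ) :
    ∀ {σ : List (List Bool)}, σ.Nodup → payoffD G x σ = SP (pAt G) x σ := by
  intro σ
  induction σ with
  | nil => intro _; rfl
  | cons a s ih =>
    intro hnd
    have ha : a ∉ s := (List.nodup_cons.mp hnd).1
    have hcap : capProb G (a :: s) a = pAt G a := by
      unfold capProb
      rw [idx_cons_self]
      simp
    have hcap2 : ∀ v ∈ s, capProb G (a :: s) v = pAt G a * capProb G s v := by
      intro v hv
      have hva : v ≠ a := fun h => ha (h ▸ hv)
      unfold capProb
      rw [idx_cons_ne _ hva]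
      simp [List.take_succ_cons]
    unfold payoffD
    rw [List.map_cons, List.sum_cons, hcap]
    have : (s.map fun v => x v * capProb G (a :: s) v)
        = s.map fun v => pAt G a * (x v * capProb G s v) := by
      apply List.map_congr_left
      intro v hv
      rw [hcap2 v hv]; ring
    rw [this, sum_map_mul_left]
    have := ih (List.nodup_cons.mp hnd).2
    unfold payoffD at this
    rw [this, SP_cons]
    ring

end RTree
namespace RTree

section idx2
variable {α : Type*} [BEq α] [LawfulBEq α]

lemma idx_map {β : Type*} [BEq β] [LawfulBEq β] (f : α → β) (hf : Function.Injective f)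
    (l : List α) (a : α) : (l.map f).idxOf (f a) = l.idxOf a := by
  induction l with
  | nil => rfl
  | cons b l ih =>
    by_cases h : a = b
    · subst h; rw [List.map_cons, idx_cons_self, idx_cons_self]
    · rw [List.map_cons, idx_cons_ne _ (fun hc => h (hf hc)), idx_cons_ne _ h, ih]

lemma idx_filter_lt (q : α → Bool) (l : List α) (x y : α)
    (hx : x ∈ l.filter q) (hy : y ∈ l.filter q) :
    ((l.filter q).idxOf x < (l.filter q).idxOf y ↔ l.idxOf x < l.idxOf y) := by
  induction l with
  | nil => simp at hx
  | cons a l ih =>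
    by_cases hqa : q a
    · rw [List.filter_cons_of_pos hqa] at hx hy ⊢
      by_cases hxa : x = a
      · subst hxa
        by_cases hya : y = x
        · subst hya; simp
        · rw [idx_cons_self, idx_cons_ne _ hya, idx_cons_self, idx_cons_ne _ hya]
          simp
      · by_cases hya : y = a
        · subst hya
          rw [idx_cons_ne _ hxa, idx_cons_self, idx_cons_ne _ hxa, idx_cons_self]
          simp
        · rw [idx_cons_ne _ hxa, idx_cons_ne _ hya, idx_cons_ne _ hxa, idx_cons_ne _ hya,
            Nat.add_lt_add_iff_right, Nat.add_lt_add_iff_right]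
          exact ih (List.mem_of_ne_of_mem hxa hx) (List.mem_of_ne_of_mem hya hy)
    · rw [List.filter_cons_of_neg hqa] at hx hy ⊢
      have hxa : x ≠ a := fun h => hqa (h ▸ (List.mem_filter.mp hx).2)
      have hya : y ≠ a := fun h => hqa (h ▸ (List.mem_filter.mp hy).2)
      rw [idx_cons_ne _ hxa, idx_cons_ne _ hya, Nat.add_lt_add_iff_right]
      exact ih hx hy

lemma idx_filter_le (q : α → Bool) (l : List α) (x y : α)
    (hx : x ∈ l.filter q) (hy : y ∈ l.filter q) :
    ((l.filter q).idxOf x ≤ (l.filter q).idxOf y ↔ l.idxOf x ≤ l.idxOf y) := by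
  constructor
  · intro h
    rcases Nat.lt_or_ge ((l.filter q).idxOf x) ((l.filter q).idxOf y) with h' | h'
    · exact le_of_lt ((idx_filter_lt q l x y hx hy).mp h')
    · have : x = y := idx_inj hx hy (le_antisymm h h')
      subst this; exact le_refl _
  · intro h
    rcases Nat.lt_or_ge (l.idxOf x) (l.idxOf y) with h' | h'
    · exact le_of_lt ((idx_filter_lt q l x y hx hy).mpr h')
    · have : x = y := idx_inj (List.mem_of_mem_filter hx) (List.mem_of_mem_filter hy)
        (le_antisymm h h')
      subst this; exact le_refl _

lemma idx_map_le {β : Type*} [BEq β] [LawfulBEq β] (f : α → β) (hf : Function.Injective f)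
    (l : List α) (a b : α) :
    ((l.map f).idxOf (f a) ≤ (l.map f).idxOf (f b) ↔ l.idxOf a ≤ l.idxOf b) := by
  rw [idx_map f hf, idx_map f hf]

end idx2

lemma dropLast_cons_ne {β : Type*} (c : β) {b : List β} (h : b ≠ []) :
    (c :: b).dropLast = c :: b.dropLast := by
  cases b with
  | nil => exact absurd rfl h
  | cons d t => rfl

lemma cons_prefix_iff {β : Type*} {a b : β} {l₁ l₂ : List β} :
    a :: l₁ <+: b :: l₂ ↔ a = b ∧ l₁ <+: l₂ := by
  constructor
  · rintro ⟨t, ht⟩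
    simp only [List.cons_append, List.cons.injEq] at ht
    exact ⟨ht.1, t, ht.2⟩
  · rintro ⟨rfl, t, ht⟩
    exact ⟨t, by rw [List.cons_append, ht]⟩

lemma search_mem_iff {G σ} (h : IsSearch G σ) (a : List Bool) : a ∈ σ ↔ a ∈ verts G :=
  h.1.mem_iff

lemma search_head {G σ} (h : IsSearch G σ) : ∃ s, σ = [] :: s := by
  have hmem : [] ∈ σ := (search_mem_iff h []).mpr (nil_mem_verts G)
  cases σ with
  | nil => exact absurd hmem (List.not_mem_nil)
  | cons a s =>
    by_cases ha : a = []
    · exact ⟨s, by rw [ha]⟩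
    · have := h.2 a (List.mem_cons_self) ha
      rw [idx_cons_self] at this
      exact absurd this (Nat.not_lt_zero _)

lemma idx_ancestor {G σ} (h : IsSearch G σ) :
    ∀ n (x : List Bool), x ∈ σ → ∀ u, u <+: x → x.length - u.length ≤ n →
      σ.idxOf u ≤ σ.idxOf x := by
  intro n
  induction n with
  | zero =>
    intro x hx u hu hn
    have hle := hu.length_le
    have : u.length = x.length := by omega
    have : u = x := by
      rw [List.prefix_iff_eq_take] at hu
      rw [hu, this, List.take_length]
    rw [this]
  | succ n ih =>
    intro x hx u hu hn
    by_cases heq : u = x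
    · rw [heq]
    · have hlt : u.length < x.length := by
        have hle := hu.length_le
        rcases Nat.lt_or_ge u.length x.length with h' | h'
        · exact h'
        · have : u.length = x.length := by omega
          rw [List.prefix_iff_eq_take] at hu
          exact absurd (by rw [hu, this, List.take_length]) heq
      have hxne : x ≠ [] := by
        intro hc; rw [hc] at hlt; simp at hlt
      have hdmem : x.dropLast ∈ σ :=
        (search_mem_iff h _).mpr
          (verts_dropLast _ ((search_mem_iff h _).mp hx) hxne)
      have hdl : x.dropLast = x.take (x.length - 1) := by
        rw [List.dropLast_eq_take]
      have hu' : u <+: x.dropLast := by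
        rw [List.prefix_iff_eq_take] at hu
        rw [List.prefix_iff_eq_take, hdl, List.take_take]
        rw [min_eq_left (by omega)]
        exact hu
      have hlen : x.dropLast.length - u.length ≤ n := by
        rw [List.length_dropLast]; omega
      have h1 := ih x.dropLast hdmem u hu' hlen
      have h2 := h.2 x hx hxne
      omega

lemma idx_ancestor' {G σ} (h : IsSearch G σ) (x : List Bool) (hx : x ∈ σ) (u : List Bool)
    (hu : u <+: x) : σ.idxOf u ≤ σ.idxOf x :=
  idx_ancestor h x.length x hx u hu (by omega)

end RTree
namespace RTree

lemma map_cons_tail {c : Bool} {s : List (List Bool)} (h : ∀ a ∈ s, ∃ l, a = c :: l) :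
    (s.map List.tail).map (List.cons c) = s := by
  rw [List.map_map]
  conv_rhs => rw [← List.map_id s]
  exact List.map_congr_left (fun a ha => by obtain ⟨l, rfl⟩ := h a ha; rfl)

lemma cons_inj (c : Bool) : Function.Injective (List.cons c) := fun x y hxy => by
  simpa using hxy

lemma untag_eq (b : Bool) (s : List (List Bool)) :
    untag b s = (s.filter (fun a => a.head? == some b)).map List.tail := by
  induction s with
  | nil => rfl
  | cons a s ih =>
    by_cases hc : a.head? = some b
    · obtain ⟨c, l, rfl⟩ : ∃ c l, a = c :: l := by
        cases a with
        | nil => simp at hc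
        | cons c l => exact ⟨c, l, rfl⟩
      simp only [List.head?_cons, Option.some.injEq] at hc
      subst hc
      cases c <;> simp [List.filter_cons, ih]
    · have h2 : (a.head? == some b) = false := beq_eq_false_iff_ne.mpr hc
      have h1 : untag b (a :: s) = untag b s := by
        cases a with
        | nil => simp [untag, List.filterMap_cons]
        | cons c l =>
          simp only [List.head?_cons, Option.some.injEq] at hc
          cases c <;> cases b <;> simp_all
      rw [h1, List.filter_cons, h2, ih]
      simp

lemma isSearch_node1 {p : ℝ} {G' : RTree} {σ} (h : IsSearch (node1 p G') σ) :
    ∃ σ', σ = [] :: σ'.map (List.cons false) ∧ IsSearch G' σ' := by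
  obtain ⟨s, rfl⟩ := search_head h
  have hperm : s.Perm ((verts G').map (List.cons false)) := by
    have h1 := h.1
    rw [show verts (node1 p G') = [] :: (verts G').map (List.cons false) from rfl] at h1
    exact h1.cons_inv
  have hform : ∀ a ∈ s, ∃ l, a = false :: l := by
    intro a ha
    obtain ⟨l, _, hl⟩ := List.mem_map.mp (hperm.subset ha)
    exact ⟨l, hl.symm⟩
  refine ⟨s.map List.tail, by rw [map_cons_tail hform], ?_, ?_⟩
  · have h1 := hperm.map List.tail
    rw [List.map_map] at h1
    refine h1.trans ?_
    rw [show (verts G').map (List.tail ∘ List.cons false)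
        = (verts G').map id from List.map_congr_left (fun a _ => rfl), List.map_id]
  · intro b hb hbne
    have hfb : false :: b ∈ s := by
      rw [← map_cons_tail hform]
      exact List.mem_map_of_mem hb
    have h2 := h.2 (false :: b) (List.mem_cons_of_mem _ hfb) (List.cons_ne_nil _ _)
    rw [dropLast_cons_ne _ hbne] at h2
    rw [idx_cons_ne s (List.cons_ne_nil _ _), idx_cons_ne s (List.cons_ne_nil _ _)] at h2
    have h3 : s.idxOf (false :: b.dropLast) < s.idxOf (false :: b) := by omega
    rw [← map_cons_tail hform, idx_map _ (cons_inj false), idx_map _ (cons_inj false)] at h3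
    exact h3

lemma isSearch_node2 {p : ℝ} {G₁ G₂ : RTree} {σ} (h : IsSearch (node2 p G₁ G₂) σ) :
    ∃ s, σ = [] :: s ∧ (∀ a ∈ s, a ≠ []) ∧
      (untag false s).map (List.cons false) = s.filter (fun a => a.head? == some false) ∧
      (untag true s).map (List.cons true) = s.filter (fun a => a.head? == some true) ∧
      IsSearch G₁ (untag false s) ∧ IsSearch G₂ (untag true s) := by
  obtain ⟨s, rfl⟩ := search_head h
  have hperm : s.Perm ((verts G₁).map (List.cons false) ++ (verts G₂).map (List.cons true)) := by
    have h1 := h.1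
    rw [show verts (node2 p G₁ G₂)
        = [] :: ((verts G₁).map (List.cons false) ++ (verts G₂).map (List.cons true)) from rfl]
      at h1
    exact h1.cons_inv
  have hform : ∀ a ∈ s, (∃ l, a = false :: l) ∨ (∃ l, a = true :: l) := by
    intro a ha
    rcases List.mem_append.mp (hperm.subset ha) with h' | h'
    · obtain ⟨l, _, hl⟩ := List.mem_map.mp h'
      exact Or.inl ⟨l, hl.symm⟩
    · obtain ⟨l, _, hl⟩ := List.mem_map.mp h'
      exact Or.inr ⟨l, hl.symm⟩
  have hne : ∀ a ∈ s, a ≠ [] := by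
    intro a ha
    rcases hform a ha with ⟨l, rfl⟩ | ⟨l, rfl⟩ <;> exact List.cons_ne_nil _ _
  have ht₁ : (s.filter (fun a => a.head? == some false)).Perm
      ((verts G₁).map (List.cons false)) := by
    have h1 := hperm.filter (fun a => a.head? == some false)
    rw [List.filter_append] at h1
    have e1 : List.filter (fun a => a.head? == some false) ((verts G₁).map (List.cons false))
        = (verts G₁).map (List.cons false) :=
      List.filter_eq_self.mpr (fun a ha => by
        obtain ⟨l, _, rfl⟩ := List.mem_map.mp ha; simp)
    have e2 : List.filter (fun a => a.head? == some false) ((verts G₂).map (List.cons true))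
        = [] :=
      List.filter_eq_nil_iff.mpr (fun a ha => by
        obtain ⟨l, _, rfl⟩ := List.mem_map.mp ha; simp)
    rw [e1, e2, List.append_nil] at h1
    exact h1
  have ht₂ : (s.filter (fun a => a.head? == some true)).Perm
      ((verts G₂).map (List.cons true)) := by
    have h1 := hperm.filter (fun a => a.head? == some true)
    rw [List.filter_append] at h1
    have e1 : List.filter (fun a => a.head? == some true) ((verts G₁).map (List.cons false))
        = [] :=
      List.filter_eq_nil_iff.mpr (fun a ha => by
        obtain ⟨l, _, rfl⟩ := List.mem_map.mp ha; simp)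
    have e2 : List.filter (fun a => a.head? == some true) ((verts G₂).map (List.cons true))
        = (verts G₂).map (List.cons true) :=
      List.filter_eq_self.mpr (fun a ha => by
        obtain ⟨l, _, rfl⟩ := List.mem_map.mp ha; simp)
    rw [e1, e2, List.nil_append] at h1
    exact h1
  have hformt₁ : ∀ a ∈ s.filter (fun a => a.head? == some false), ∃ l, a = false :: l := by
    intro a ha
    obtain ⟨l, _, hl⟩ := List.mem_map.mp (ht₁.subset ha)
    exact ⟨l, hl.symm⟩
  have hformt₂ : ∀ a ∈ s.filter (fun a => a.head? == some true), ∃ l, a = true :: l := by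
    intro a ha
    obtain ⟨l, _, hl⟩ := List.mem_map.mp (ht₂.subset ha)
    exact ⟨l, hl.symm⟩
  have hmb₁ : (untag false s).map (List.cons false)
      = s.filter (fun a => a.head? == some false) := by
    rw [untag_eq]; exact map_cons_tail hformt₁
  have hmb₂ : (untag true s).map (List.cons true)
      = s.filter (fun a => a.head? == some true) := by
    rw [untag_eq]; exact map_cons_tail hformt₂
  refine ⟨s, rfl, hne, hmb₁, hmb₂, ⟨?_, ?_⟩, ⟨?_, ?_⟩⟩
  · -- perm for G₁
    rw [untag_eq]
    have h1 := ht₁.map List.tail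
    rw [List.map_map] at h1
    refine h1.trans ?_
    rw [show (verts G₁).map (List.tail ∘ List.cons false)
        = (verts G₁).map id from List.map_congr_left (fun a _ => rfl), List.map_id]
  · -- order for G₁
    intro b hb hbne
    have hfb : false :: b ∈ s.filter (fun a => a.head? == some false) := by
      rw [← hmb₁]; exact List.mem_map_of_mem hb
    have hfbs : false :: b ∈ s := List.mem_of_mem_filter hfb
    have hxv : (false :: b.dropLast) ∈ ([] :: s) := by
      have h0 : (false :: b) ∈ ([] :: s) := List.mem_cons_of_mem _ hfbs
      have h1 : (false :: b).dropLast ∈ verts (node2 p G₁ G₂) :=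
        verts_dropLast _ ((search_mem_iff h _).mp h0) (List.cons_ne_nil _ _)
      rw [dropLast_cons_ne _ hbne] at h1
      exact (search_mem_iff h _).mpr h1
    have hxs : (false :: b.dropLast) ∈ s := by
      rcases List.mem_cons.mp hxv with h' | h'
      · exact absurd h' (List.cons_ne_nil _ _)
      · exact h'
    have hxf : (false :: b.dropLast) ∈ s.filter (fun a => a.head? == some false) :=
      List.mem_filter.mpr ⟨hxs, by simp⟩
    have h2 := h.2 (false :: b) (List.mem_cons_of_mem _ hfbs) (List.cons_ne_nil _ _)
    rw [dropLast_cons_ne _ hbne] at h2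
    rw [idx_cons_ne s (List.cons_ne_nil _ _), idx_cons_ne s (List.cons_ne_nil _ _)] at h2
    have h3 : s.idxOf (false :: b.dropLast) < s.idxOf (false :: b) := by omega
    have h4 := (idx_filter_lt (fun a => a.head? == some false) s _ _ hxf hfb).mpr h3
    rw [← hmb₁, idx_map _ (cons_inj false), idx_map _ (cons_inj false)] at h4
    exact h4
  · -- perm for G₂
    rw [untag_eq]
    have h1 := ht₂.map List.tail
    rw [List.map_map] at h1
    refine h1.trans ?_
    rw [show (verts G₂).map (List.tail ∘ List.cons true)
        = (verts G₂).map id from List.map_congr_left (fun a _ => rfl), List.map_id]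
  · -- order for G₂
    intro b hb hbne
    have hfb : true :: b ∈ s.filter (fun a => a.head? == some true) := by
      rw [← hmb₂]; exact List.mem_map_of_mem hb
    have hfbs : true :: b ∈ s := List.mem_of_mem_filter hfb
    have hxv : (true :: b.dropLast) ∈ ([] :: s) := by
      have h0 : (true :: b) ∈ ([] :: s) := List.mem_cons_of_mem _ hfbs
      have h1 : (true :: b).dropLast ∈ verts (node2 p G₁ G₂) :=
        verts_dropLast _ ((search_mem_iff h _).mp h0) (List.cons_ne_nil _ _)
      rw [dropLast_cons_ne _ hbne] at h1
      exact (search_mem_iff h _).mpr h1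
    have hxs : (true :: b.dropLast) ∈ s := by
      rcases List.mem_cons.mp hxv with h' | h'
      · exact absurd h' (List.cons_ne_nil _ _)
      · exact h'
    have hxf : (true :: b.dropLast) ∈ s.filter (fun a => a.head? == some true) :=
      List.mem_filter.mpr ⟨hxs, by simp⟩
    have h2 := h.2 (true :: b) (List.mem_cons_of_mem _ hfbs) (List.cons_ne_nil _ _)
    rw [dropLast_cons_ne _ hbne] at h2
    rw [idx_cons_ne s (List.cons_ne_nil _ _), idx_cons_ne s (List.cons_ne_nil _ _)] at h2
    have h3 : s.idxOf (true :: b.dropLast) < s.idxOf (true :: b) := by omega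
    have h4 := (idx_filter_lt (fun a => a.head? == some true) s _ _ hxf hfb).mpr h3
    rw [← hmb₂, idx_map _ (cons_inj true), idx_map _ (cons_inj true)] at h4
    exact h4

lemma isSearch_pre {G : RTree} : ∀ {σ}, IsSearch G σ → Pre G σ := by
  induction G with
  | leaf p =>
    intro σ h
    obtain ⟨s, rfl⟩ := search_head h
    have h1 : s.Perm [] := by
      have h2 := h.1
      rw [show verts (leaf p) = [[]] from rfl] at h2
      exact h2.cons_inv
    rw [h1.eq_nil]
    exact Pre.leaf p
  | node1 p G' ih =>
    intro σ h
    obtain ⟨σ', rfl, hs⟩ := isSearch_node1 h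
    exact Pre.node1 _ _ _ (ih hs)
  | node2 p G₁ G₂ ih₁ ih₂ =>
    intro σ h
    obtain ⟨s, rfl, hne, _, _, h₁, h₂⟩ := isSearch_node2 h
    exact Pre.node2 _ _ _ _ hne (ih₁ h₁) (ih₂ h₂)

lemma part1 {G : RTree} (hG : G.valid) {σ} (h : IsSearch G σ) :
    payoffD G (hide G) σ ≤ valT G := by
  have hnd : σ.Nodup := h.1.symm.nodup (verts_nodup G)
  rw [payoffD_eq_SP _ hnd]
  have hb := pre_bound hG (isSearch_pre h)
  have hPP : PP (pAt G) σ = piT G := by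
    have := (h.1.map (pAt G)).prod_eq
    unfold PP
    rw [this]
    exact PP_verts G
  rw [hPP] at hb
  have hπ := piT_lt_one hG
  have e : valT G / (1 - piT G) * (1 - piT G) = valT G := by
    have : (1:ℝ) - piT G ≠ 0 := by linarith
    field_simp
  rw [e] at hb
  exact hb

end RTree
namespace RTree

lemma filter_split {α : Type*} [BEq α] [LawfulBEq α] (q : α → Bool) :
    ∀ l : List α, l.Nodup →
      (∀ x ∈ l, ∀ y ∈ l, q x → ¬(q y = true) → l.idxOf x < l.idxOf y) →
      l = l.filter q ++ l.filter (fun a => !(q a)) := by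
  intro l
  induction l with
  | nil => intro _ _; rfl
  | cons a l ih =>
    intro hnd ho
    have hal : a ∉ l := (List.nodup_cons.mp hnd).1
    by_cases hqa : q a
    · rw [List.filter_cons_of_pos hqa, List.filter_cons_of_neg (by simp [hqa])]
      rw [List.cons_append]
      congr 1
      refine ih (List.nodup_cons.mp hnd).2 ?_
      intro x hx y hy hqx hqy
      have hxa : x ≠ a := fun hc => hal (hc ▸ hx)
      have hya : y ≠ a := fun hc => hal (hc ▸ hy)
      have := ho x (List.mem_cons_of_mem _ hx) y (List.mem_cons_of_mem _ hy) hqx hqy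
      rw [idx_cons_ne _ hxa, idx_cons_ne _ hya] at this
      omega
    · have hall : ∀ x ∈ l, ¬(q x = true) := by
        intro x hx hqx
        have hxa : x ≠ a := fun hc => hqa (hc ▸ hqx)
        have := ho x (List.mem_cons_of_mem _ hx) a (List.mem_cons_self) hqx hqa
        rw [idx_cons_self, idx_cons_ne _ hxa] at this
        omega
      rw [List.filter_cons_of_neg hqa, List.filter_cons_of_pos (by simp [hqa])]
      rw [List.filter_eq_nil_iff.mpr hall, List.nil_append]
      rw [List.filter_eq_self.mpr (fun x hx => by simp [hall x hx])]

lemma isDFS_node1 {p : ℝ} {G' : RTree} {σ} (h : IsDFS (node1 p G') σ) :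
    ∃ σ', σ = [] :: σ'.map (List.cons false) ∧ IsDFS G' σ' := by
  obtain ⟨σ', rfl, hs⟩ := isSearch_node1 h.1
  refine ⟨σ', rfl, hs, ?_⟩
  intro v a w hv ha hw hpre h1 h2
  have e : ∀ x : List Bool,
      ([] :: σ'.map (List.cons false)).idxOf (false :: x) = σ'.idxOf x + 1 := by
    intro x
    rw [idx_cons_ne _ (List.cons_ne_nil _ _), idx_map _ (cons_inj false)]
  have hm : ∀ x : List Bool, x ∈ σ' → false :: x ∈ [] :: σ'.map (List.cons false) :=
    fun x hx => List.mem_cons_of_mem _ (List.mem_map_of_mem hx)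
  have key := h.2 (false :: v) (false :: a) (false :: w) (hm v hv) (hm a ha) (hm w hw)
    (cons_prefix_iff.mpr ⟨rfl, hpre⟩) (by rw [e, e]; omega) (by rw [e, e]; omega)
  exact (cons_prefix_iff.mp key).2

lemma isDFS_node2 {p : ℝ} {G₁ G₂ : RTree} {σ} (h : IsDFS (node2 p G₁ G₂) σ) :
    ∃ σ₁ σ₂, (σ = [] :: (σ₁.map (List.cons false) ++ σ₂.map (List.cons true)) ∨
        σ = [] :: (σ₂.map (List.cons true) ++ σ₁.map (List.cons false))) ∧
      IsDFS G₁ σ₁ ∧ IsDFS G₂ σ₂ := by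
  obtain ⟨s, rfl, hne, hmb₁, hmb₂, h₁, h₂⟩ := isSearch_node2 h.1
  have hndσ : ([] :: s).Nodup := h.1.1.symm.nodup (verts_nodup _)
  have hnds : s.Nodup := (List.nodup_cons.mp hndσ).2
  -- DFS property for the two untagged searches
  have dfs1 : IsDFS G₁ (untag false s) := by
    refine ⟨h₁, ?_⟩
    intro v a w hv ha hw hpre hle1 hle2
    have hmt : ∀ x : List Bool, x ∈ untag false s →
        false :: x ∈ s.filter (fun a => a.head? == some false) := by
      intro x hx
      rw [← hmb₁]; exact List.mem_map_of_mem hx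
    have hms : ∀ x : List Bool, x ∈ untag false s → false :: x ∈ [] :: s :=
      fun x hx => List.mem_cons_of_mem _ (List.mem_of_mem_filter (hmt x hx))
    have conv : ∀ x y : List Bool, x ∈ untag false s → y ∈ untag false s →
        (untag false s).idxOf x ≤ (untag false s).idxOf y →
        ([] :: s).idxOf (false :: x) ≤ ([] :: s).idxOf (false :: y) := by
      intro x y hx hy hxy
      have e1 : (untag false s).idxOf x
          = (s.filter (fun a => a.head? == some false)).idxOf (false :: x) := by
        rw [← hmb₁, idx_map _ (cons_inj false)]
      have e2 : (untag false s).idxOf y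
          = (s.filter (fun a => a.head? == some false)).idxOf (false :: y) := by
        rw [← hmb₁, idx_map _ (cons_inj false)]
      rw [e1, e2] at hxy
      have h3 := (idx_filter_le _ s _ _ (hmt x hx) (hmt y hy)).mp hxy
      rw [idx_cons_ne s (List.cons_ne_nil _ _), idx_cons_ne s (List.cons_ne_nil _ _)]
      omega
    have key := h.2 (false :: v) (false :: a) (false :: w) (hms v hv) (hms a ha) (hms w hw)
      (cons_prefix_iff.mpr ⟨rfl, hpre⟩) (conv v w hv hw hle1) (conv w a hw ha hle2)
    exact (cons_prefix_iff.mp key).2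
  have dfs2 : IsDFS G₂ (untag true s) := by
    refine ⟨h₂, ?_⟩
    intro v a w hv ha hw hpre hle1 hle2
    have hmt : ∀ x : List Bool, x ∈ untag true s →
        true :: x ∈ s.filter (fun a => a.head? == some true) := by
      intro x hx
      rw [← hmb₂]; exact List.mem_map_of_mem hx
    have hms : ∀ x : List Bool, x ∈ untag true s → true :: x ∈ [] :: s :=
      fun x hx => List.mem_cons_of_mem _ (List.mem_of_mem_filter (hmt x hx))
    have conv : ∀ x y : List Bool, x ∈ untag true s → y ∈ untag true s →
        (untag true s).idxOf x ≤ (untag true s).idxOf y →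
        ([] :: s).idxOf (true :: x) ≤ ([] :: s).idxOf (true :: y) := by
      intro x y hx hy hxy
      have e1 : (untag true s).idxOf x
          = (s.filter (fun a => a.head? == some true)).idxOf (true :: x) := by
        rw [← hmb₂, idx_map _ (cons_inj true)]
      have e2 : (untag true s).idxOf y
          = (s.filter (fun a => a.head? == some true)).idxOf (true :: y) := by
        rw [← hmb₂, idx_map _ (cons_inj true)]
      rw [e1, e2] at hxy
      have h3 := (idx_filter_le _ s _ _ (hmt x hx) (hmt y hy)).mp hxy
      rw [idx_cons_ne s (List.cons_ne_nil _ _), idx_cons_ne s (List.cons_ne_nil _ _)]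
      omega
    have key := h.2 (true :: v) (true :: a) (true :: w) (hms v hv) (hms a ha) (hms w hw)
      (cons_prefix_iff.mpr ⟨rfl, hpre⟩) (conv v w hv hw hle1) (conv w a hw ha hle2)
    exact (cons_prefix_iff.mp key).2
  refine ⟨untag false s, untag true s, ?_, dfs1, dfs2⟩
  -- contiguity
  cases s with
  | nil =>
    exfalso
    have hv : [] ∈ verts G₁ := nil_mem_verts G₁
    have hv2 : ([] : List Bool) ∈ untag false ([] : List (List Bool)) :=
      h₁.1.mem_iff.mpr hv
    simp [untag] at hv2
  | cons a₀ s' =>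
    obtain ⟨c, l₀, rfl⟩ : ∃ c l, a₀ = c :: l := by
      cases a₀ with
      | nil => exact absurd rfl (hne [] (List.mem_cons_self))
      | cons c l => exact ⟨c, l, rfl⟩
    set s := (c :: l₀) :: s' with hs
    -- index of [c] is 1
    have hcs : [c] ∈ ([] :: s) := by
      refine (search_mem_iff h.1 _).mpr ?_
      cases c
      · exact List.mem_cons_of_mem _
          (List.mem_append_left _ (List.mem_map_of_mem (nil_mem_verts G₁)))
      · exact List.mem_cons_of_mem _
          (List.mem_append_right _ (List.mem_map_of_mem (nil_mem_verts G₂)))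
    have ha₀ : (c :: l₀) ∈ ([] :: s) :=
      List.mem_cons_of_mem _ (List.mem_cons_self)
    have hidxa₀ : ([] :: s).idxOf (c :: l₀) = 1 := by
      rw [idx_cons_ne _ (List.cons_ne_nil _ _), hs, idx_cons_self]
    have hidxc : ([] :: s).idxOf [c] = 1 := by
      have hle := idx_ancestor' h.1 (c :: l₀) ha₀ [c] (cons_prefix_iff.mpr ⟨rfl, List.nil_prefix⟩)
      rw [hidxa₀] at hle
      rw [idx_cons_ne _ (List.cons_ne_nil _ _)] at hle ⊢
      omega
    -- ordering: all c-branch vertices precede all others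
    have horder : ∀ x ∈ s, ∀ y ∈ s, x.head? = some c → y.head? ≠ some c →
        ([] :: s).idxOf x < ([] :: s).idxOf y := by
      intro x hx y hy hqx hqy
      obtain ⟨xl, rfl⟩ : ∃ xl, x = c :: xl := by
        cases x with
        | nil => simp at hqx
        | cons d xl =>
          simp only [List.head?_cons, Option.some.injEq] at hqx
          exact ⟨xl, by rw [hqx]⟩
      have hyne : y ≠ [] := hne y hy
      by_contra hcon
      push_neg at hcon
      have hley : ([] :: s).idxOf [c] ≤ ([] :: s).idxOf y := by
        rw [hidxc, idx_cons_ne _ hyne]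
        omega
      have key := h.2 [c] (c :: xl) y hcs (List.mem_cons_of_mem _ hx)
        (List.mem_cons_of_mem _ hy) (cons_prefix_iff.mpr ⟨rfl, List.nil_prefix⟩)
        hley hcon
      cases y with
      | nil => exact hyne rfl
      | cons d yl =>
        obtain ⟨hc', -⟩ := cons_prefix_iff.mp key
        exact hqy (by rw [List.head?_cons, hc'])
    -- apply the split
    have horder_s : ∀ x ∈ s, ∀ y ∈ s, (x.head? == some c) →
        ¬((y.head? == some c) = true) → s.idxOf x < s.idxOf y := by
      intro x hx y hy hqx hqy
      have h1 := horder x hx y hy (by simpa using hqx) (by simpa using hqy)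
      rw [idx_cons_ne _ (hne x hx), idx_cons_ne _ (hne y hy)] at h1
      omega
    have hsplit := filter_split (fun a => a.head? == some c) s hnds horder_s
    have hfc : s.filter (fun a => !(a.head? == some c)) =
        s.filter (fun a => a.head? == some (!c)) := by
      apply List.filter_congr
      intro a ha
      obtain ⟨d, al, rfl⟩ : ∃ d al, a = d :: al := by
        cases a with
        | nil => exact absurd rfl (hne [] ha)
        | cons d al => exact ⟨d, al, rfl⟩
      cases d <;> cases c <;> simp
    rw [hfc] at hsplit
    cases c
    · left
      rw [show (!false) = true from rfl] at hsplit
      rw [hmb₁, hmb₂]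
      exact congrArg (List.cons []) hsplit
    · right
      rw [show (!true) = false from rfl] at hsplit
      rw [hmb₁, hmb₂]
      exact congrArg (List.cons []) hsplit

lemma isDFS_dfsi {G : RTree} : ∀ {σ}, IsDFS G σ → DFSi G σ := by
  induction G with
  | leaf p =>
    intro σ h
    obtain ⟨s, rfl⟩ := search_head h.1
    have h1 : s.Perm [] := by
      have h2 := h.1.1
      rw [show verts (leaf p) = [[]] from rfl] at h2
      exact h2.cons_inv
    rw [h1.eq_nil]
    exact DFSi.leaf p
  | node1 p G' ih =>
    intro σ h
    obtain ⟨σ', rfl, hs⟩ := isDFS_node1 h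
    exact DFSi.node1 _ _ _ (ih hs)
  | node2 p G₁ G₂ ih₁ ih₂ =>
    intro σ h
    obtain ⟨σ₁, σ₂, hor, hd₁, hd₂⟩ := isDFS_node2 h
    rcases hor with rfl | rfl
    · exact DFSi.node2a _ _ _ _ _ (ih₁ hd₁) (ih₂ hd₂)
    · exact DFSi.node2b _ _ _ _ _ (ih₁ hd₁) (ih₂ hd₂)

lemma part2 {G : RTree} (hG : G.valid) {σ} (h : IsDFS G σ) :
    payoffD G (hide G) σ = valT G := by
  have hnd : σ.Nodup := h.1.1.symm.nodup (verts_nodup G)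
  rw [payoffD_eq_SP _ hnd]
  exact (DFSi_SP_eq (isDFS_dfsi h) hG).1

end RTree

open RTree in
/-- the tree hiding strategy `h_G` guarantees an expected payoff of at
most `V_G` against every expanding search, and every depth-first expanding search is a
best response to `h_G` (achieving the payoff `V_G` exactly). -/
theorem hiding_strategy_guarantee (G : RTree) (hG : G.valid) :
    (∀ σ : List (List Bool), IsSearch G σ → payoffD G (hide G) σ ≤ G.valT) ∧
    (∀ σ : List (List Bool), IsDFS G σ → payoffD G (hide G) σ = G.valT) := by
  constructor
  · intro σ h
    exact part1 hG h
  · intro σ h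
    exact part2 hG h
end

section
/- Let G be a rooted tree whose root has two branches G₁ and G₂. Then q_{G₁} = λ_G(1/V_{G₁} − π(G₂)/V_{G₂}) and q_{G₂} = λ_G(1/V_{G₂} − π(G₁)/V_{G₁}) satisfy q_{G₁} ≥ 0, q_{G₂} ≥ 0, and q_{G₁} + q_{G₂} = 1; that is, they are well-defined probabilities. -/
set_option maxHeartbeats 1000000 in
open RTree in
lemma RTree.key (G : RTree) (h : G.valid) :
    0 < piT G ∧ piT G < 1 ∧ piT G ≤ valT G ∧ valT G ≤ 1 := by
  induction G with
  | leaf p =>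
      obtain ⟨h1, h2⟩ := h
      exact ⟨h1, h2, le_refl _, h2.le⟩
  | node1 p G' ih =>
      obtain ⟨⟨hp0, hp1⟩, hv⟩ := h
      obtain ⟨hπ0, hπ1, hπV, hV1⟩ := ih hv
      simp only [piT, valT]
      refine ⟨mul_pos hp0 hπ0, ?_, ?_, ?_⟩ <;> nlinarith
  | node2 p G₁ G₂ ih₁ ih₂ =>
      obtain ⟨⟨hp0, hp1⟩, hv₁, hv₂⟩ := h
      obtain ⟨hπ₁0, hπ₁1, hπV₁, hV₁1⟩ := ih₁ hv₁
      obtain ⟨hπ₂0, hπ₂1, hπV₂, hV₂1⟩ := ih₂ hv₂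
      have hV₁0 : 0 < valT G₁ := lt_of_lt_of_le hπ₁0 hπV₁
      have hV₂0 : 0 < valT G₂ := lt_of_lt_of_le hπ₂0 hπV₂
      simp only [piT, valT]
      set π₁ := piT G₁; set π₂ := piT G₂
      set A := (1 - π₁) / valT G₁ with hA
      set B := (1 - π₂) / valT G₂ with hB
      have hA0 : 0 < A := div_pos (by linarith) hV₁0
      have hB0 : 0 < B := div_pos (by linarith) hV₂0
      have eqA : A * valT G₁ = 1 - π₁ := div_mul_cancel₀ _ hV₁0.ne'
      have eqB : B * valT G₂ = 1 - π₂ := div_mul_cancel₀ _ hV₂0.ne'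
      have hS : 0 < A + B := by linarith
      have hSi : (A + B) * (A + B)⁻¹ = 1 := mul_inv_cancel₀ hS.ne'
      have hSi0 : 0 < (A + B)⁻¹ := inv_pos.mpr hS
      -- A ≥ 1 - π₁, B ≥ 1 - π₂ :
      have hA1 : 1 - π₁ ≤ A := by nlinarith
      have hB1 : 1 - π₂ ≤ B := by nlinarith
      -- π₁ * A ≤ 1 - π₁, π₂ * B ≤ 1 - π₂ :
      have hπA : π₁ * A ≤ 1 - π₁ := by nlinarith
      have hπB : π₂ * B ≤ 1 - π₂ := by nlinarith
      have hkey1 : (π₁ * π₂) * (A + B) ≤ 1 - π₁ * π₂ := by nlinarith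
      have hkey2 : 1 - π₁ * π₂ ≤ A + B := by nlinarith
      have e1 : (A + B)⁻¹ * ((π₁ * π₂) * (A + B)) = π₁ * π₂ := by
        rw [mul_comm (π₁ * π₂), ← mul_assoc, inv_mul_cancel₀ hS.ne', one_mul]
      have h1 := mul_le_mul_of_nonneg_left hkey1 hSi0.le
      have hmain1 : π₁ * π₂ ≤ (A + B)⁻¹ * (1 - π₁ * π₂) := by linarith
      have e3 : (A + B)⁻¹ * (A + B) = 1 := inv_mul_cancel₀ hS.ne'
      have h3 := mul_le_mul_of_nonneg_left hkey2 hSi0.le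
      have hmain3 : (A + B)⁻¹ * (1 - π₁ * π₂) ≤ 1 := by linarith
      have hX0 : 0 ≤ (A + B)⁻¹ * (1 - π₁ * π₂) := le_trans (by nlinarith) hmain1
      have hππ : p * (π₁ * π₂) < 1 := by
        have h01 : π₁ * π₂ < 1 := by nlinarith [mul_pos hπ₁0 hπ₂0]
        nlinarith [mul_pos hπ₁0 hπ₂0]
      refine ⟨mul_pos hp0 (mul_pos hπ₁0 hπ₂0), hππ, ?_, ?_⟩
      · calc p * (π₁ * π₂) ≤ p * ((A + B)⁻¹ * (1 - π₁ * π₂)) :=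
              mul_le_mul_of_nonneg_left hmain1 hp0.le
          _ = p * (A + B)⁻¹ * (1 - π₁ * π₂) := by ring
      · calc p * (A + B)⁻¹ * (1 - π₁ * π₂)
              = p * ((A + B)⁻¹ * (1 - π₁ * π₂)) := by ring
          _ ≤ 1 * ((A + B)⁻¹ * (1 - π₁ * π₂)) :=
              mul_le_mul_of_nonneg_right hp1 hX0
          _ = (A + B)⁻¹ * (1 - π₁ * π₂) := one_mul _
          _ ≤ 1 := hmain3

open RTree in
/-- at a root with two branches `G₁` and `G₂`, the quantities
`q_{G₁} = λ_G(1/V_{G₁} − π(G₂)/V_{G₂})` and `q_{G₂} = λ_G(1/V_{G₂} − π(G₁)/V_{G₁})`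
are well-defined probabilities: both are nonnegative and they sum to `1`. -/
theorem branch_probabilities_well_defined
    (p : ℝ) (G₁ G₂ : RTree) (hG : (RTree.node2 p G₁ G₂).valid) :
    0 ≤ lamT G₁ G₂ * (1 / valT G₁ - piT G₂ / valT G₂) ∧
    0 ≤ lamT G₁ G₂ * (1 / valT G₂ - piT G₁ / valT G₁) ∧
    lamT G₁ G₂ * (1 / valT G₁ - piT G₂ / valT G₂) +
      lamT G₁ G₂ * (1 / valT G₂ - piT G₁ / valT G₁) = 1 := by
  
  obtain ⟨⟨hp0, hp1⟩, hv₁, hv₂⟩ := hG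
  obtain ⟨hπ₁0, hπ₁1, hπV₁, hV₁1⟩ := RTree.key G₁ hv₁
  obtain ⟨hπ₂0, hπ₂1, hπV₂, hV₂1⟩ := RTree.key G₂ hv₂
  have hV₁0 : 0 < valT G₁ := lt_of_lt_of_le hπ₁0 hπV₁
  have hV₂0 : 0 < valT G₂ := lt_of_lt_of_le hπ₂0 hπV₂
  have hS : 0 < (1 - piT G₁) / valT G₁ + (1 - piT G₂) / valT G₂ := by
    have := div_pos (by linarith : (0:ℝ) < 1 - piT G₁) hV₁0
    have := div_pos (by linarith : (0:ℝ) < 1 - piT G₂) hV₂0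
    linarith
  have hlam : 0 < lamT G₁ G₂ := inv_pos.mpr hS
  have h1 : piT G₂ / valT G₂ ≤ 1 / valT G₁ := by
    calc piT G₂ / valT G₂ ≤ 1 := by
          rw [div_le_one hV₂0]; linarith
      _ ≤ 1 / valT G₁ := by rw [le_div_iff₀ hV₁0]; linarith
  have h2 : piT G₁ / valT G₁ ≤ 1 / valT G₂ := by
    calc piT G₁ / valT G₁ ≤ 1 := by
          rw [div_le_one hV₁0]; linarith
      _ ≤ 1 / valT G₂ := by rw [le_div_iff₀ hV₂0]; linarith
  refine ⟨by nlinarith, by nlinarith, ?_⟩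
  have : lamT G₁ G₂ * ((1 - piT G₁) / valT G₁ + (1 - piT G₂) / valT G₂) = 1 :=
    inv_mul_cancel₀ hS.ne'
  calc lamT G₁ G₂ * (1 / valT G₁ - piT G₂ / valT G₂) +
      lamT G₁ G₂ * (1 / valT G₂ - piT G₁ / valT G₁)
      = lamT G₁ G₂ * ((1 - piT G₁) / valT G₁ + (1 - piT G₂) / valT G₂) := by
        rw [sub_div, sub_div]; ring
    _ = 1 := this
end
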